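/- If a metric space (X, d_X) contains a sequence of n-dimensional dilated cubes f_m: {0,1,...,k_m}ⁿ → X with k_m → ∞, then the asymptotic Assouad-Nagata dimension of (X, d_X) is at least n. -/

import Mathlib

open Filter

def ScaleChain {X : Type*} (d : X → X → ℝ) (s : ℝ) (U : Set X) (x y : X) : Prop :=
  ∃ (m : ℕ) (c : ℕ → X), c 0 = x ∧ c m = y ∧ (∀ i ≤ m, c i ∈ U) ∧
    ∀ i < m, d (c i) (c (i + 1)) < s

def IsControlFun {X : Type*} (d : X → X → ℝ) (n : ℕ) (D : ℝ → ℝ) : Prop :=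
  ∀ s : ℝ, 0 < s → ∃ U : Fin (n + 1) → Set X,
    (∀ x, ∃ i, x ∈ U i) ∧ ∀ i x y, ScaleChain d s (U i) x y → d x y ≤ D s

def ANdimLE {X : Type*} (d : X → X → ℝ) (n : ℕ) : Prop :=
  ∃ C : ℝ, 0 < C ∧ ∃ b : ℝ, IsControlFun d n (fun s => C * s + b)


open Finset Equiv
open scoped Classical

namespace SpernerCube

/-- Per-cell counting lemma: for a labelling `l` of the `N+1` vertices of a cell with
labels in `{0,…,N}`, the number of indices `j` such that the labels away from `j`
cover `{0,…,N-1}` is odd iff `l` covers all of `{0,…,N}`. -/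
lemma lemA (N : ℕ) (l : Fin (N+1) → ℕ) (hl : ∀ t, l t ≤ N) :
    (((univ.filter (fun j : Fin (N+1) => ∀ b < N, ∃ t ≠ j, l t = b)).card : ZMod 2))
      = if (∀ b ≤ N, ∃ t, l t = b) then 1 else 0 := by
  by_cases hR : ∀ b ≤ N, ∃ t, l t = b
  · rw [if_pos hR]
    -- l is bijective as a self-map of Fin (N+1)
    set l' : Fin (N+1) → Fin (N+1) := fun t => ⟨l t, Nat.lt_succ_of_le (hl t)⟩ with hl'
    have hsurj : Function.Surjective l' := by
      intro b
      obtain ⟨t, ht⟩ := hR b.val (Nat.lt_succ_iff.mp b.isLt)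
      exact ⟨t, Fin.ext ht⟩
    have hinj : Function.Injective l' := Finite.injective_iff_surjective.mpr hsurj
    obtain ⟨j₀, hj₀⟩ := hsurj ⟨N, Nat.lt_succ_self N⟩
    have hj₀' : l j₀ = N := congrArg Fin.val hj₀
    have : (univ.filter (fun j : Fin (N+1) => ∀ b < N, ∃ t ≠ j, l t = b)) = {j₀} := by
      ext j
      simp only [mem_filter, mem_univ, true_and, mem_singleton]
      constructor
      · intro hQ
        by_contra hne
        have hlt : l j < N := by
          rcases Nat.lt_or_ge (l j) N with h | h
          · exact h
          · exfalso
            have : l j = N := le_antisymm (hl j) h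
            exact hne (hinj (Fin.ext (by simp [hl', this, hj₀'])))
        obtain ⟨t, htj, ht⟩ := hQ (l j) hlt
        exact htj (hinj (Fin.ext (by simp [hl', ht])))
      · rintro rfl
        intro b hb
        obtain ⟨t, ht⟩ := hR b (le_of_lt hb)
        refine ⟨t, ?_, ht⟩
        rintro rfl
        rw [hj₀'] at ht; omega
    rw [this]; simp
  · rw [if_neg hR]
    push_neg at hR
    obtain ⟨b₀, hb₀N, hb₀⟩ := hR
    by_cases hall : ∀ b < N, ∃ t, l t = b
    · -- the only missing label is N; two vertices share a label
      have hb₀N' : b₀ = N := by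
        by_contra h
        obtain ⟨t, ht⟩ := hall b₀ (lt_of_le_of_ne hb₀N h)
        exact hb₀ t ht
      rw [hb₀N'] at hb₀
      have hlt : ∀ t, l t < N := fun t => lt_of_le_of_ne (hl t) (hb₀ t)
      set l'' : Fin (N+1) → Fin N := fun t => ⟨l t, hlt t⟩ with hl''
      obtain ⟨t₁, t₂, ht12, heq⟩ := Fintype.exists_ne_map_eq_of_card_lt l'' (by simp)
      have heq' : l t₁ = l t₂ := congrArg Fin.val heq
      -- fibers
      set F : ℕ → Finset (Fin (N+1)) := fun b => univ.filter (fun t => l t = b) with hF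
      have hsum : (N + 1) = ∑ b ∈ range N, (F b).card := by
        have := Finset.card_eq_sum_card_fiberwise
          (f := l) (s := univ) (t := range N) (fun t _ => mem_range.mpr (hlt t))
        simpa using this
      have hmemF : ∀ t, t ∈ F (l t) := fun t => by simp [hF]
      have hFne : ∀ b ∈ range N, 1 ≤ (F b).card := by
        intro b hb
        obtain ⟨t, ht⟩ := hall b (mem_range.mp hb)
        exact card_pos.mpr ⟨t, by simp [hF, ht]⟩
      have hSbound : ∀ S : Finset ℕ, S ⊆ range N → ∑ b ∈ S, (F b).card ≤ S.card + 1 := by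
        intro S hS
        have h1 : ∑ b ∈ range N, (F b).card
            = ∑ b ∈ S, (F b).card + ∑ b ∈ range N \ S, (F b).card :=
          by rw [← Finset.sum_sdiff hS]; exact Nat.add_comm _ _
        have h2 : (range N \ S).card ≤ ∑ b ∈ range N \ S, (F b).card := by
          have := Finset.card_nsmul_le_sum (range N \ S) (fun b => (F b).card) 1
            (fun x hx => hFne x (mem_sdiff.mp hx).1)
          simpa using this
        have h3 : (range N \ S).card = N - S.card := by
          rw [card_sdiff_of_subset hS, card_range]
        have h4 : S.card ≤ N := by
          simpa using card_le_card hS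
        omega
      have hcard2 : ∀ b ∈ range N, (F b).card ≤ 2 := by
        intro b hb
        have := hSbound {b} (by simpa using hb)
        simpa using this
      have : (univ.filter (fun j : Fin (N+1) => ∀ b < N, ∃ t ≠ j, l t = b)) = {t₁, t₂} := by
        ext j
        simp only [mem_filter, mem_univ, true_and, mem_insert, mem_singleton]
        constructor
        · intro hQ
          by_contra hne
          push_neg at hne
          obtain ⟨t', ht'j, ht'⟩ := hQ (l j) (hlt j)
          by_cases hv : l j = l t₁
          · -- fiber of l t₁ has ≥ 3 elements
            have hsub : ({t₁, t₂, j} : Finset (Fin (N+1))) ⊆ F (l t₁) := by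
              intro t ht
              simp only [mem_insert, mem_singleton] at ht
              have hlt1 : l t = l t₁ := by
                rcases ht with h | h | h
                · rw [h]
                · rw [h, ← heq']
                · rw [h, hv]
              rw [hF]; simp [hlt1]
            have h3 : 3 ≤ (F (l t₁)).card := by
              refine le_trans ?_ (card_le_card hsub)
              rw [card_insert_of_notMem (by simp [ht12, Ne.symm hne.1]),
                card_insert_of_notMem (by simp [Ne.symm hne.2]), card_singleton]
            have := hcard2 (l t₁) (mem_range.mpr (hlt t₁))
            omega
          · -- two fibers each with ≥ 2 elements
            have h1 : 2 ≤ (F (l t₁)).card := by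
              refine le_trans ?_ (card_le_card (show ({t₁, t₂} : Finset _) ⊆ F (l t₁) from ?_))
              · rw [card_pair ht12]
              · intro t ht
                simp only [mem_insert, mem_singleton] at ht
                have hlt1 : l t = l t₁ := by
                  rcases ht with h | h
                  · rw [h]
                  · rw [h, ← heq']
                rw [hF]; simp [hlt1]
            have h2 : 2 ≤ (F (l j)).card := by
              refine le_trans ?_ (card_le_card (show ({j, t'} : Finset _) ⊆ F (l j) from ?_))
              · rw [card_pair (Ne.symm ht'j)]
              · intro t ht
                simp only [mem_insert, mem_singleton] at ht
                have hlt1 : l t = l j := by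
                  rcases ht with h | h
                  · rw [h]
                  · rw [h, ht']
                rw [hF]; simp [hlt1]
            have := hSbound {l t₁, l j} ?_
            · rw [Finset.sum_pair (Ne.symm hv), card_pair (Ne.symm hv)] at this
              omega
            · intro b hb
              simp only [mem_insert, mem_singleton] at hb
              rcases hb with rfl | rfl
              · exact mem_range.mpr (hlt t₁)
              · exact mem_range.mpr (hlt j)
        · intro hj b hb
          obtain ⟨t, ht⟩ := hall b hb
          by_cases h1 : t = j
          · rcases hj with hj | hj
            · exact ⟨t₂, by rw [hj]; exact Ne.symm ht12,
                by rw [← heq', ← hj, ← h1]; exact ht⟩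
            · exact ⟨t₁, by rw [hj]; exact ht12,
                by rw [heq', ← hj, ← h1]; exact ht⟩
          · exact ⟨t, h1, ht⟩
      rw [this, card_pair ht12]
      decide
    · push_neg at hall
      obtain ⟨b₁, hb₁, hb₁'⟩ := hall
      have : (univ.filter (fun j : Fin (N+1) => ∀ b < N, ∃ t ≠ j, l t = b)) = ∅ := by
        ext j
        simp only [mem_filter, mem_univ, true_and, notMem_empty, iff_false]
        intro hQ
        obtain ⟨t, _, ht⟩ := hQ b₁ hb₁
        exact hb₁' t ht
      rw [this]; simp


abbrev Cell (n k : ℕ) := (Fin n → Fin k) × Equiv.Perm (Fin n)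

/-- the `j`-th vertex of the Kuhn cell `c` (as a point of `{0,…,k}ⁿ ⊆ ℕⁿ`). -/
def vert {n k : ℕ} (c : Cell n k) (j : ℕ) : Fin n → ℕ :=
  fun i => (c.1 i : ℕ) + if ((c.2.symm i : Fin n) : ℕ) < j then 1 else 0

lemma vert_le {n k : ℕ} (c : Cell n k) (j : ℕ) (i : Fin n) : vert c j i ≤ k := by
  unfold vert; have := (c.1 i).isLt; split <;> omega

def Rainbow {n k : ℕ} (lab : (Fin n → ℕ) → ℕ) (c : Cell n k) : Prop :=
  ∀ b ≤ n, ∃ j ≤ n, lab (vert c j) = b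

lemma finRotate_symm_val (n : ℕ) (u : Fin (n+1)) :
    (((finRotate (n+1)).symm u) : ℕ) = if (u:ℕ) = 0 then n else (u:ℕ) - 1 := by
  obtain ⟨w, rfl⟩ := (finRotate (n+1)).surjective u
  rw [Equiv.symm_apply_apply, finRotate_succ_apply, Fin.val_add_one]
  by_cases h : w = Fin.last n
  · simp [h]
  · simp only [if_neg h]
    have : (w:ℕ) + 1 ≠ 0 := by omega
    rw [if_neg this]
    omega

/-- extension of a permutation of `Fin n` to `Fin (n+1)` fixing the last element. -/
def extPerm {n : ℕ} (π : Equiv.Perm (Fin n)) : Equiv.Perm (Fin (n+1)) where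
  toFun := Fin.snoc (fun t => (π t).castSucc) (Fin.last n)
  invFun := Fin.snoc (fun t => (π.symm t).castSucc) (Fin.last n)
  left_inv := by
    intro t
    induction t using Fin.lastCases with
    | last => simp
    | cast t => simp
  right_inv := by
    intro t
    induction t using Fin.lastCases with
    | last => simp
    | cast t => simp

@[simp] lemma extPerm_last {n : ℕ} (π : Equiv.Perm (Fin n)) :
    extPerm π (Fin.last n) = Fin.last n := by simp [extPerm]

@[simp] lemma extPerm_castSucc {n : ℕ} (π : Equiv.Perm (Fin n)) (t : Fin n) :
    extPerm π t.castSucc = (π t).castSucc := by simp [extPerm]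

@[simp] lemma extPerm_symm_last {n : ℕ} (π : Equiv.Perm (Fin n)) :
    (extPerm π).symm (Fin.last n) = Fin.last n := by
  rw [Equiv.symm_apply_eq, extPerm_last]

@[simp] lemma extPerm_symm_castSucc {n : ℕ} (π : Equiv.Perm (Fin n)) (t : Fin n) :
    (extPerm π).symm t.castSucc = (π.symm t).castSucc := by
  rw [Equiv.symm_apply_eq, extPerm_castSucc, Equiv.apply_symm_apply]

/-- restriction of a permutation fixing the last element. -/
def restrPerm {n : ℕ} (π : Equiv.Perm (Fin (n+1))) (h : π (Fin.last n) = Fin.last n) :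
    Equiv.Perm (Fin n) where
  toFun t := Fin.castPred (π t.castSucc)
    (fun he => absurd (π.injective (he.trans h.symm))
      (Fin.ne_of_lt (Fin.castSucc_lt_last t)))
  invFun t := Fin.castPred (π.symm t.castSucc)
    (fun he => by
      have : π (Fin.last n) = t.castSucc := by
        rw [← he, Equiv.apply_symm_apply]
      rw [h] at this
      exact absurd this.symm (Fin.ne_of_lt (Fin.castSucc_lt_last t)))
  left_inv := by intro t; simp
  right_inv := by intro t; simp

lemma extPerm_restrPerm {n : ℕ} (π : Equiv.Perm (Fin (n+1)))
    (h : π (Fin.last n) = Fin.last n) : extPerm (restrPerm π h) = π := by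
  apply Equiv.ext
  intro t
  induction t using Fin.lastCases with
  | last => rw [extPerm_last, h]
  | cast t => rw [extPerm_castSucc]; simp [restrPerm]



section Flip

variable {n k : ℕ}

abbrev Pair (n k : ℕ) := Cell (n+1) k × Fin (n+2)

/-- boundary pairs -/
def Bd (p : Pair n k) : Prop :=
  ((p.2 : ℕ) = 0 ∧ (p.1.1 (p.1.2 0) : ℕ) + 1 = k) ∨
  ((p.2 : ℕ) = n + 1 ∧ (p.1.1 (p.1.2 (Fin.last n)) : ℕ) = 0)

def bump (x : Fin (n+1) → Fin k) (c : Fin (n+1)) (hx : (x c : ℕ) + 1 < k) :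
    Fin (n+1) → Fin k := fun i => if i = c then ⟨(x c : ℕ) + 1, hx⟩ else x i

def drop (x : Fin (n+1) → Fin k) (c : Fin (n+1)) : Fin (n+1) → Fin k :=
  fun i => if i = c then ⟨(x c : ℕ) - 1, by have := (x c).isLt; omega⟩ else x i

def flip (p : Pair n k) : Pair n k :=
  if h0 : (p.2 : ℕ) = 0 then
    if hx : (p.1.1 (p.1.2 0) : ℕ) + 1 < k then
      ((bump p.1.1 (p.1.2 0) hx, (finRotate (n+1)).trans p.1.2), Fin.last (n+1))
    else p
  else if hl : (p.2 : ℕ) = n + 1 then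
    if _hx : 0 < (p.1.1 (p.1.2 (Fin.last n)) : ℕ) then
      ((drop p.1.1 (p.1.2 (Fin.last n)), (finRotate (n+1)).symm.trans p.1.2), 0)
    else p
  else
    ((p.1.1, (Equiv.swap (⟨(p.2:ℕ) - 1, by have := p.2.isLt; omega⟩ : Fin (n+1))
        (⟨(p.2:ℕ), by have := p.2.isLt; omega⟩ : Fin (n+1))).trans p.1.2), p.2)

/-- vertices away from position `j` are unchanged under the adjacent transposition. -/
lemma vert_swap (x : Fin (n+1) → Fin k) (π : Equiv.Perm (Fin (n+1)))
    (a b : Fin (n+1)) (j t : ℕ) (hab : (a:ℕ) + 1 = b) (hj : (b:ℕ) = j) (ht : t ≠ j) :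
    vert ((x, (Equiv.swap a b).trans π) : Cell (n+1) k) t = vert (x, π) t := by
  funext i
  show (x i : ℕ) + (if ((((Equiv.swap a b).trans π).symm i : Fin (n+1)) : ℕ) < t then 1 else 0)
      = (x i : ℕ) + (if ((π.symm i : Fin (n+1)) : ℕ) < t then 1 else 0)
  congr 1
  have hsymm : ((Equiv.swap a b).trans π).symm i = (Equiv.swap a b) (π.symm i) := by
    rw [Equiv.symm_trans_apply, Equiv.symm_swap]
  rw [hsymm]
  rcases eq_or_ne (π.symm i) a with h | h
  · rw [h, Equiv.swap_apply_left]
    have h2 := congrArg Fin.val h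
    split_ifs <;> omega
  · rcases eq_or_ne (π.symm i) b with h' | h'
    · rw [h', Equiv.swap_apply_right]
      have h2 := congrArg Fin.val h'
      split_ifs <;> omega
    · rw [Equiv.swap_apply_of_ne_of_ne h h']

/-- vertex shift under the rotation move. -/
lemma vert_rot (x : Fin (n+1) → Fin k) (π : Equiv.Perm (Fin (n+1)))
    (hx : (x (π 0) : ℕ) + 1 < k) (t : ℕ) (ht : t ≤ n) :
    vert ((bump x (π 0) hx, (finRotate (n+1)).trans π) : Cell (n+1) k) t
      = vert (x, π) (t+1) := by
  funext i
  show (bump x (π 0) hx i : ℕ)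
        + (if ((((finRotate (n+1)).trans π).symm i : Fin (n+1)) : ℕ) < t then 1 else 0)
      = (x i : ℕ) + (if ((π.symm i : Fin (n+1)) : ℕ) < t + 1 then 1 else 0)
  have hsymm : (((finRotate (n+1)).trans π).symm i) = (finRotate (n+1)).symm (π.symm i) :=
    Equiv.symm_trans_apply _ _ _
  rw [hsymm]
  rcases eq_or_ne i (π 0) with h | h
  · have h0 : π.symm i = 0 := by rw [h, Equiv.symm_apply_apply]
    have hb : (bump x (π 0) hx i : ℕ) = (x (π 0) : ℕ) + 1 := by
      rw [bump, if_pos h]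
    rw [hb, h0, h]
    have hval : (((finRotate (n+1)).symm (0 : Fin (n+1))) : ℕ) = n := by
      rw [finRotate_symm_val]; simp
    rw [hval]
    have h1 : ¬ (n < t) := by omega
    have h2 : ((0 : Fin (n+1)) : ℕ) < t + 1 := by simp
    rw [if_neg h1, if_pos h2]
  · have hb : (bump x (π 0) hx i : ℕ) = (x i : ℕ) := by
      rw [bump, if_neg h]
    rw [hb]
    congr 1
    have hu : π.symm i ≠ 0 := fun he => h (by rw [← (Equiv.apply_eq_iff_eq_symm_apply π).mpr he.symm])
    have hu' : ((π.symm i : Fin (n+1)) : ℕ) ≠ 0 := fun he => hu (Fin.ext he)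
    rw [finRotate_symm_val, if_neg hu']
    have : ((π.symm i : Fin (n+1)) : ℕ) < n + 1 := (π.symm i).isLt
    split_ifs <;> omega





variable {n k : ℕ}

lemma rot_cancel1 (π : Equiv.Perm (Fin (n+1))) :
    (finRotate (n+1)).symm.trans ((finRotate (n+1)).trans π) = π := by
  ext t
  rw [Equiv.trans_apply, Equiv.trans_apply, Equiv.apply_symm_apply]

lemma rot_cancel2 (π : Equiv.Perm (Fin (n+1))) :
    (finRotate (n+1)).trans ((finRotate (n+1)).symm.trans π) = π := by
  ext t
  rw [Equiv.trans_apply, Equiv.trans_apply, Equiv.symm_apply_apply]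

lemma rot_last : (finRotate (n+1)) (Fin.last n) = 0 := by
  rw [finRotate_succ_apply, Fin.last_add_one]

lemma rot_symm_zero : (finRotate (n+1)).symm (0 : Fin (n+1)) = Fin.last n := by
  rw [Equiv.symm_apply_eq, rot_last]

lemma trans_rot_last (π : Equiv.Perm (Fin (n+1))) :
    ((finRotate (n+1)).trans π) (Fin.last n) = π 0 := by
  simp [Equiv.trans_apply, rot_last]

lemma trans_rotsymm_zero (π : Equiv.Perm (Fin (n+1))) :
    ((finRotate (n+1)).symm.trans π) 0 = π (Fin.last n) := by
  rw [Equiv.trans_apply, rot_symm_zero]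

lemma drop_bump (x : Fin (n+1) → Fin k) (c : Fin (n+1)) (hx : (x c : ℕ) + 1 < k) :
    drop (bump x c hx) c = x := by
  funext i
  apply Fin.ext
  by_cases hi : i = c <;> simp [drop, bump, hi]

lemma bump_drop (x : Fin (n+1) → Fin k) (c : Fin (n+1)) (hx : 0 < (x c : ℕ))
    (hx' : ((drop x c) c : ℕ) + 1 < k) :
    bump (drop x c) c hx' = x := by
  funext i
  apply Fin.ext
  by_cases hi : i = c <;> simp [drop, bump, hi]
  omega

/-- the chain condition on pairs -/
def Qp (lab : (Fin (n+1) → ℕ) → ℕ) (p : Pair n k) : Prop :=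
  ∀ b < n + 1, ∃ t : Fin (n+2), t ≠ p.2 ∧ lab (vert p.1 (t : ℕ)) = b

lemma flip_zero (x : Fin (n+1) → Fin k) (π : Equiv.Perm (Fin (n+1))) (j : Fin (n+2))
    (h0 : (j:ℕ) = 0) (hx : (x (π 0) : ℕ) + 1 < k) :
    flip (((x, π), j) : Pair n k)
      = ((bump x (π 0) hx, (finRotate (n+1)).trans π), Fin.last (n+1)) := by
  simp [flip, h0, hx]

lemma flip_last (x : Fin (n+1) → Fin k) (π : Equiv.Perm (Fin (n+1))) (j : Fin (n+2))
    (hl : (j:ℕ) = n + 1) (hx : 0 < (x (π (Fin.last n)) : ℕ)) :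
    flip (((x, π), j) : Pair n k)
      = ((drop x (π (Fin.last n)), (finRotate (n+1)).symm.trans π), 0) := by
  simp [flip, hl, hx]

lemma flip_mid (x : Fin (n+1) → Fin k) (π : Equiv.Perm (Fin (n+1))) (j : Fin (n+2))
    (h0 : (j:ℕ) ≠ 0) (hl : (j:ℕ) ≠ n + 1) :
    flip (((x, π), j) : Pair n k)
      = ((x, (Equiv.swap (⟨(j:ℕ) - 1, by have := j.isLt; omega⟩ : Fin (n+1))
          (⟨(j:ℕ), by have := j.isLt; omega⟩ : Fin (n+1))).trans π), j) := by
  simp [flip, h0, hl]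

lemma Qp_flip_zero (lab : (Fin (n+1) → ℕ) → ℕ) (x : Fin (n+1) → Fin k)
    (π : Equiv.Perm (Fin (n+1))) (j : Fin (n+2)) (h0 : (j:ℕ) = 0)
    (hx : (x (π 0) : ℕ) + 1 < k) (hQ : Qp lab ((x, π), j)) :
    Qp lab (((bump x (π 0) hx, (finRotate (n+1)).trans π), Fin.last (n+1)) : Pair n k) := by
  intro b hb
  obtain ⟨t, htj, hlab⟩ := hQ b hb
  have htv : (t:ℕ) ≠ 0 := fun h => htj (Fin.ext (h.trans h0.symm))
  have htlt := t.isLt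
  refine ⟨⟨(t:ℕ) - 1, by omega⟩, ?_, ?_⟩
  · intro he
    have h2 := congrArg Fin.val he
    simp only [Fin.val_last] at h2
    omega
  · show lab (vert ((bump x (π 0) hx, (finRotate (n+1)).trans π) : Cell (n+1) k) ((t:ℕ)-1)) = b
    rw [vert_rot x π hx ((t:ℕ)-1) (by omega)]
    have h3 : (t:ℕ) - 1 + 1 = (t:ℕ) := by omega
    rw [h3]
    exact hlab

lemma Qp_flip_last (lab : (Fin (n+1) → ℕ) → ℕ) (x : Fin (n+1) → Fin k)
    (π : Equiv.Perm (Fin (n+1))) (j : Fin (n+2)) (hl : (j:ℕ) = n + 1)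
    (hx : 0 < (x (π (Fin.last n)) : ℕ)) (hQ : Qp lab ((x, π), j)) :
    Qp lab (((drop x (π (Fin.last n)), (finRotate (n+1)).symm.trans π), 0) : Pair n k) := by
  have hcisLt := (x (π (Fin.last n))).isLt
  have hx' : (((drop x (π (Fin.last n))) (((finRotate (n+1)).symm.trans π) 0)) : ℕ) + 1 < k := by
    rw [trans_rotsymm_zero]
    show ((drop x (π (Fin.last n))) (π (Fin.last n)) : ℕ) + 1 < k
    simp [drop]
    omega
  have hbump : (bump (drop x (π (Fin.last n))) (((finRotate (n+1)).symm.trans π) 0) hx',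
      (finRotate (n+1)).trans ((finRotate (n+1)).symm.trans π)) = ((x, π) : Cell (n+1) k) := by
    refine Prod.ext ?_ (rot_cancel2 π)
    · show bump (drop x (π (Fin.last n))) (((finRotate (n+1)).symm.trans π) 0) hx' = x
      funext i
      apply Fin.ext
      have h60 : (((finRotate (n+1)).symm.trans π) 0) = π (Fin.last n) := trans_rotsymm_zero π
      by_cases hi : i = π (Fin.last n) <;> simp [bump, drop, h60, hi] <;> omega
  have key : ∀ t : ℕ, t ≤ n → vert ((x, π) : Cell (n+1) k) t
      = vert ((drop x (π (Fin.last n)), (finRotate (n+1)).symm.trans π) : Cell (n+1) k) (t+1) := by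
    intro t ht
    conv_rhs => rw [← vert_rot (drop x (π (Fin.last n))) ((finRotate (n+1)).symm.trans π) hx' t ht]
    exact congrArg (fun c => vert c t) hbump.symm
  intro b hb
  obtain ⟨t, htj, hlab⟩ := hQ b hb
  have htlt := t.isLt
  have htv : (t:ℕ) ≠ n + 1 := fun h => htj (Fin.ext (h.trans hl.symm))
  refine ⟨⟨(t:ℕ) + 1, by omega⟩, ?_, ?_⟩
  · intro he
    have h2 := congrArg Fin.val he
    simp only [Fin.val_zero] at h2
    omega
  · show lab (vert ((drop x (π (Fin.last n)), (finRotate (n+1)).symm.trans π) : Cell (n+1) k)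
      ((t:ℕ)+1)) = b
    rw [← key (t:ℕ) (by omega)]
    exact hlab

lemma Qp_flip_mid (lab : (Fin (n+1) → ℕ) → ℕ) (x : Fin (n+1) → Fin k)
    (π : Equiv.Perm (Fin (n+1))) (j : Fin (n+2)) (h0 : (j:ℕ) ≠ 0) (hl : (j:ℕ) ≠ n + 1)
    (hQ : Qp lab ((x, π), j)) :
    Qp lab (((x, (Equiv.swap (⟨(j:ℕ) - 1, by have := j.isLt; omega⟩ : Fin (n+1))
        (⟨(j:ℕ), by have := j.isLt; omega⟩ : Fin (n+1))).trans π), j) : Pair n k) := by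
  intro b hb
  obtain ⟨t, htj, hlab⟩ := hQ b hb
  refine ⟨t, htj, ?_⟩
  have htv : (t:ℕ) ≠ (j:ℕ) := fun h => htj (Fin.ext h)
  rw [show ((⟨(j:ℕ), by have := j.isLt; omega⟩ : Fin (n+1)) : ℕ) = (j:ℕ) from rfl] at *
  rw [vert_swap x π _ _ (j:ℕ) (t:ℕ) (by simp; omega) rfl htv]
  exact hlab



lemma bump_drop_eq (x : Fin (n+1) → Fin k) (c : Fin (n+1)) (hx : 0 < (x c : ℕ))
    (e : Fin (n+1)) (he : e = c) (hx2 : ((drop x c) e : ℕ) + 1 < k) :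
    bump (drop x c) e hx2 = x := by
  funext i
  apply Fin.ext
  by_cases hi : i = c <;> simp [bump, drop, he, hi] <;> omega

lemma swap_cancel (a b : Fin (n+1)) (π : Equiv.Perm (Fin (n+1))) :
    (Equiv.swap a b).trans ((Equiv.swap a b).trans π) = π := by
  ext t
  rw [Equiv.trans_apply, Equiv.trans_apply, Equiv.swap_apply_self]

lemma interior_zero {x : Fin (n+1) → Fin k} {π : Equiv.Perm (Fin (n+1))} {j : Fin (n+2)}
    (h0 : (j:ℕ) = 0) (hB : ¬ Bd (((x, π), j) : Pair n k)) : (x (π 0) : ℕ) + 1 < k := by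
  have h1 := (x (π 0)).isLt
  have h2 : ¬ ((j:ℕ) = 0 ∧ (x (π 0) : ℕ) + 1 = k) := fun hc => hB (Or.inl hc)
  omega

lemma interior_last {x : Fin (n+1) → Fin k} {π : Equiv.Perm (Fin (n+1))} {j : Fin (n+2)}
    (hl : (j:ℕ) = n + 1) (hB : ¬ Bd (((x, π), j) : Pair n k)) :
    0 < (x (π (Fin.last n)) : ℕ) := by
  have h2 : ¬ ((j:ℕ) = n + 1 ∧ (x (π (Fin.last n)) : ℕ) = 0) := fun hc => hB (Or.inr hc)
  omega

lemma flip_mem (lab : (Fin (n+1) → ℕ) → ℕ) (p : Pair n k)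
    (hQ : Qp lab p) (hB : ¬ Bd p) : Qp lab (flip p) ∧ ¬ Bd (flip p) := by
  obtain ⟨⟨x, π⟩, j⟩ := p
  by_cases h0 : (j:ℕ) = 0
  · have hx := interior_zero h0 hB
    rw [flip_zero x π j h0 hx]
    refine ⟨Qp_flip_zero lab x π j h0 hx hQ, ?_⟩
    rintro (⟨hc, _⟩ | ⟨_, hc⟩)
    · simp only [Fin.val_last] at hc; omega
    · rw [show ((bump x (π 0) hx, (finRotate (n+1)).trans π).2 (Fin.last n))
          = π 0 from trans_rot_last π] at hc
      simp [bump] at hc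
  · by_cases hl : (j:ℕ) = n + 1
    · have hx := interior_last hl hB
      rw [flip_last x π j hl hx]
      refine ⟨Qp_flip_last lab x π j hl hx hQ, ?_⟩
      rintro (⟨_, hc⟩ | ⟨hc, _⟩)
      · rw [show ((drop x (π (Fin.last n)), (finRotate (n+1)).symm.trans π).2 0)
            = π (Fin.last n) from trans_rotsymm_zero π] at hc
        have := (x (π (Fin.last n))).isLt
        simp [drop] at hc
        omega
      · simp at hc
    · rw [flip_mid x π j h0 hl]
      refine ⟨Qp_flip_mid lab x π j h0 hl hQ, ?_⟩
      rintro (⟨hc, _⟩ | ⟨hc, _⟩)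
      · exact h0 hc
      · exact hl hc

lemma flip_flip (p : Pair n k) (hB : ¬ Bd p) : flip (flip p) = p := by
  obtain ⟨⟨x, π⟩, j⟩ := p
  by_cases h0 : (j:ℕ) = 0
  · have hx := interior_zero h0 hB
    rw [flip_zero x π j h0 hx]
    have hx2 : 0 < ((bump x (π 0) hx) (((finRotate (n+1)).trans π) (Fin.last n)) : ℕ) := by
      rw [trans_rot_last]
      simp [bump]
    rw [flip_last _ _ _ (by simp) hx2]
    refine Prod.ext (Prod.ext ?_ (rot_cancel1 π)) (Fin.ext (by simpa using h0.symm))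
    · show drop (bump x (π 0) hx) (((finRotate (n+1)).trans π) (Fin.last n)) = x
      rw [trans_rot_last]
      exact drop_bump x (π 0) hx
  · by_cases hl : (j:ℕ) = n + 1
    · have hx := interior_last hl hB
      rw [flip_last x π j hl hx]
      have hx2 : ((drop x (π (Fin.last n))) (((finRotate (n+1)).symm.trans π) 0) : ℕ) + 1 < k := by
        rw [trans_rotsymm_zero]
        have := (x (π (Fin.last n))).isLt
        simp [drop]
        omega
      rw [flip_zero _ _ _ (by simp) hx2]
      refine Prod.ext (Prod.ext ?_ (rot_cancel2 π)) (Fin.ext (by simpa using hl.symm))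
      · exact bump_drop_eq x (π (Fin.last n)) hx _ (trans_rotsymm_zero π) hx2
    · rw [flip_mid x π j h0 hl, flip_mid _ _ _ h0 hl]
      exact Prod.ext (Prod.ext rfl (swap_cancel _ _ π)) rfl

lemma flip_ne (p : Pair n k) (hB : ¬ Bd p) : flip p ≠ p := by
  obtain ⟨⟨x, π⟩, j⟩ := p
  by_cases h0 : (j:ℕ) = 0
  · rw [flip_zero x π j h0 (interior_zero h0 hB)]
    intro h
    have h2 := congrArg (fun q : Pair n k => ((q.2 : Fin (n+2)) : ℕ)) h
    simp only [Fin.val_last] at h2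
    omega
  · by_cases hl : (j:ℕ) = n + 1
    · rw [flip_last x π j hl (interior_last hl hB)]
      intro h
      have h2 := congrArg (fun q : Pair n k => ((q.2 : Fin (n+2)) : ℕ)) h
      simp only [Fin.val_zero] at h2
      omega
    · rw [flip_mid x π j h0 hl]
      intro h
      have h2 := congrArg (fun q : Pair n k => q.1.2) h
      have h3 := congrArg (fun σ : Equiv.Perm (Fin (n+1)) =>
        σ (⟨(j:ℕ) - 1, by have := j.isLt; omega⟩ : Fin (n+1))) h2
      simp only [Equiv.trans_apply, Equiv.swap_apply_left] at h3
      have h4 := π.injective h3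
      have h5 := congrArg Fin.val h4
      simp only at h5
      omega

open scoped Classical in
lemma step2 (lab : (Fin (n+1) → ℕ) → ℕ) :
    (((univ.filter (Qp (n := n) (k := k) lab)).card : ZMod 2))
      = ((univ.filter (fun p : Pair n k => Qp lab p ∧ Bd p)).card : ZMod 2) := by
  have h1 : (univ.filter (Qp lab)).filter Bd
      = univ.filter (fun p : Pair n k => Qp lab p ∧ Bd p) := by
    rw [filter_filter]
  have hsplit := Finset.card_filter_add_card_filter_not
    (s := univ.filter (Qp (n := n) (k := k) lab)) (p := Bd)
  have h2 : ((((univ.filter (Qp lab)).filter (fun p : Pair n k => ¬ Bd p)).card : ZMod 2)) = 0 := by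
    have hz : ∑ _p ∈ (univ.filter (Qp lab)).filter (fun p : Pair n k => ¬ Bd p),
        (1 : ZMod 2) = 0 := by
      apply Finset.sum_involution (g := fun p _ => flip p)
      · intro a _; decide
      · intro a ha _
        rw [mem_filter] at ha
        exact flip_ne a ha.2
      · intro a ha
        rw [mem_filter] at ha ⊢
        rw [mem_filter] at ha
        obtain ⟨⟨_, hQ⟩, hB⟩ := ha
        obtain ⟨hQ', hB'⟩ := flip_mem lab a hQ hB
        exact ⟨by rw [mem_filter]; exact ⟨mem_univ _, hQ'⟩, hB'⟩
      · intro a ha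
        rw [mem_filter] at ha
        exact flip_flip a ha.2
    rw [Finset.sum_const, nsmul_eq_mul, mul_one] at hz
    exact hz
  rw [← h1]
  have := congrArg (fun m : ℕ => (m : ZMod 2)) hsplit
  push_cast at this
  rw [h2, add_zero] at this
  exact this.symm



open scoped Classical in
lemma step1 (lab : (Fin (n+1) → ℕ) → ℕ)
    (hC : ∀ v : Fin (n+1) → ℕ, (∀ j, v j ≤ k) → lab v ≤ n + 1)
    (lemA : ∀ (N : ℕ) (l : Fin (N+1) → ℕ), (∀ t, l t ≤ N) →
      (((univ.filter (fun j : Fin (N+1) => ∀ b < N, ∃ t ≠ j, l t = b)).card : ZMod 2))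
        = if (∀ b ≤ N, ∃ t, l t = b) then 1 else 0) :
    ((univ.filter (Qp (n := n) (k := k) lab)).card : ZMod 2)
      = ((univ.filter (fun c : Cell (n+1) k => Rainbow lab c)).card : ZMod 2) := by
  have hfib : (univ.filter (Qp (n := n) (k := k) lab)).card
      = ∑ c ∈ (univ : Finset (Cell (n+1) k)),
        ((univ.filter (Qp (n := n) (k := k) lab)).filter (fun p => p.1 = c)).card :=
    Finset.card_eq_sum_card_fiberwise (fun x _ => mem_univ _)
  have hper : ∀ c : Cell (n+1) k,
      ((((univ.filter (Qp (n := n) (k := k) lab)).filter (fun p => p.1 = c)).card : ZMod 2))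
        = if (∀ b ≤ n+1, ∃ t : Fin (n+2), lab (vert c (t:ℕ)) = b) then 1 else 0 := by
    intro c
    have himg : (univ.filter (Qp (n := n) (k := k) lab)).filter (fun p => p.1 = c)
        = (univ.filter (fun j : Fin (n+2) => Qp lab (c, j))).image (fun j => ((c, j) : Pair n k)) := by
      ext p
      simp only [mem_filter, mem_univ, true_and, mem_image]
      constructor
      · rintro ⟨hQ, h1⟩
        have hcp : ((c, p.2) : Pair n k) = p := Prod.ext h1.symm rfl
        exact ⟨p.2, by rw [hcp]; exact hQ, hcp⟩
      · rintro ⟨j, hQ, rfl⟩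
        exact ⟨hQ, rfl⟩
    rw [himg, Finset.card_image_of_injective _ (fun a b h => congrArg Prod.snd h)]
    have hfilt : (univ.filter (fun j : Fin (n+2) => Qp lab (c, j)))
        = (univ.filter (fun j : Fin (n+2) =>
            ∀ b < n+1, ∃ t ≠ j, (fun t : Fin (n+2) => lab (vert c (t:ℕ))) t = b)) := by
      ext j
      simp only [mem_filter, mem_univ, true_and]
      exact Iff.rfl
    rw [hfilt, lemA (n+1) (fun t : Fin (n+2) => lab (vert c (t:ℕ)))
      (fun t => hC _ (fun i => vert_le c _ i))]
  calc ((univ.filter (Qp (n := n) (k := k) lab)).card : ZMod 2)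
      = ∑ c ∈ (univ : Finset (Cell (n+1) k)),
          ((((univ.filter (Qp (n := n) (k := k) lab)).filter (fun p => p.1 = c)).card : ZMod 2)) := by
        rw [hfib]; push_cast; rfl
    _ = ∑ c ∈ (univ : Finset (Cell (n+1) k)),
          (if (∀ b ≤ n+1, ∃ t : Fin (n+2), lab (vert c (t:ℕ)) = b) then (1 : ZMod 2) else 0) :=
        Finset.sum_congr rfl (fun c _ => hper c)
    _ = ((univ.filter (fun c : Cell (n+1) k =>
          ∀ b ≤ n+1, ∃ t : Fin (n+2), lab (vert c (t:ℕ)) = b)).card : ZMod 2) := by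
        rw [Finset.sum_boole]
    _ = ((univ.filter (fun c : Cell (n+1) k => Rainbow lab c)).card : ZMod 2) := by
        congr 1
        congr 1
        ext c
        simp only [mem_filter, mem_univ, true_and]
        constructor
        · intro h b hb
          obtain ⟨t, ht⟩ := h b hb
          exact ⟨(t:ℕ), by have := t.isLt; omega, ht⟩
        · intro h b hb
          obtain ⟨j, hj, hjl⟩ := h b hb
          exact ⟨⟨j, by omega⟩, hjl⟩

lemma vert_ext (hk : 0 < k) (x' : Fin n → Fin k) (π' : Equiv.Perm (Fin n)) (t : ℕ) (ht : t ≤ n) :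
    vert ((Fin.snoc x' ⟨0, hk⟩, extPerm π') : Cell (n+1) k) t
      = Fin.snoc (vert ((x', π') : Cell n k) t) 0 := by
  funext i
  induction i using Fin.lastCases with
  | last =>
    show (((Fin.snoc x' (⟨0, hk⟩ : Fin k) : Fin (n+1) → Fin k) (Fin.last n) : Fin k) : ℕ)
        + (if (((extPerm π').symm (Fin.last n) : Fin (n+1)) : ℕ) < t then 1 else 0)
      = (Fin.snoc (vert ((x', π') : Cell n k) t) 0 : Fin (n+1) → ℕ) (Fin.last n)
    rw [Fin.snoc_last, Fin.snoc_last, extPerm_symm_last]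
    have hnt : ¬ ((Fin.last n : Fin (n+1)) : ℕ) < t := by
      simp only [Fin.val_last]; omega
    rw [if_neg hnt]
  | cast i =>
    show (((Fin.snoc x' (⟨0, hk⟩ : Fin k) : Fin (n+1) → Fin k) i.castSucc : Fin k) : ℕ)
        + (if (((extPerm π').symm i.castSucc : Fin (n+1)) : ℕ) < t then 1 else 0)
      = (Fin.snoc (vert ((x', π') : Cell n k) t) 0 : Fin (n+1) → ℕ) i.castSucc
    rw [Fin.snoc_castSucc, Fin.snoc_castSucc, extPerm_symm_castSucc]
    show (x' i : ℕ) + (if (((π'.symm i).castSucc : Fin (n+1)) : ℕ) < t then 1 else 0)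
      = (x' i : ℕ) + (if ((π'.symm i : Fin n) : ℕ) < t then 1 else 0)
    rw [Fin.coe_castSucc]

open scoped Classical in
lemma Qp_ext_iff (hk : 0 < k) (lab : (Fin (n+1) → ℕ) → ℕ)
    (x' : Fin n → Fin k) (π' : Equiv.Perm (Fin n)) :
    Qp lab (((Fin.snoc x' ⟨0, hk⟩, extPerm π'), Fin.last (n+1)) : Pair n k)
      ↔ Rainbow (fun v => lab (Fin.snoc v 0)) ((x', π') : Cell n k) := by
  constructor
  · intro h b hb
    obtain ⟨t, htne, htl⟩ := h b (by omega)
    have htv : (t:ℕ) ≠ n + 1 := fun he => htne (Fin.ext (by simpa using he))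
    have htlt := t.isLt
    refine ⟨(t:ℕ), by omega, ?_⟩
    show lab (Fin.snoc (vert ((x', π') : Cell n k) (t:ℕ)) 0) = b
    rw [← vert_ext hk x' π' (t:ℕ) (by omega)]
    exact htl
  · intro h b hb
    obtain ⟨j, hj, hjl⟩ := h b (by omega)
    refine ⟨⟨j, by omega⟩, ?_, ?_⟩
    · intro he
      have := congrArg Fin.val he
      simp only [Fin.val_last] at this
      omega
    · show lab (vert ((Fin.snoc x' ⟨0, hk⟩, extPerm π') : Cell (n+1) k) j) = b
      rw [vert_ext hk x' π' j hj]
      exact hjl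



open scoped Classical in
lemma step3 (hk : 0 < k) (lab : (Fin (n+1) → ℕ) → ℕ)
    (hA : ∀ v (i : Fin (n+1)), (∀ j, v j ≤ k) → v i = 0 → lab v ≠ (i:ℕ) + 1)
    (hB : ∀ v (i : Fin (n+1)), (∀ j, v j ≤ k) → v i = k → lab v ≠ 0 ∧ lab v ≤ (i:ℕ) + 1) :
    (univ.filter (fun c : Cell n k => Rainbow (fun v => lab (Fin.snoc v 0)) c)).card
      = (univ.filter (fun p : Pair n k => Qp lab p ∧ Bd p)).card := by
  apply Finset.card_bij
    (fun c _ => (((Fin.snoc c.1 (⟨0, hk⟩ : Fin k), extPerm c.2), Fin.last (n+1)) : Pair n k))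
  · intro c hc
    rw [mem_filter] at hc ⊢
    obtain ⟨x', π'⟩ := c
    refine ⟨mem_univ _, (Qp_ext_iff hk lab x' π').mpr hc.2, Or.inr ⟨by simp, ?_⟩⟩
    show (((Fin.snoc x' (⟨0, hk⟩ : Fin k) : Fin (n+1) → Fin k) (extPerm π' (Fin.last n))) : ℕ) = 0
    rw [extPerm_last, Fin.snoc_last]
  · intro c₁ h₁ c₂ h₂ he
    obtain ⟨x₁, π₁⟩ := c₁; obtain ⟨x₂, π₂⟩ := c₂
    have hx := congrArg (fun q : Pair n k => q.1.1) he
    have hπ := congrArg (fun q : Pair n k => q.1.2) he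
    simp only at hx hπ
    refine Prod.ext ?_ ?_
    · show x₁ = x₂
      funext t
      have h3 := congrFun hx t.castSucc
      rwa [Fin.snoc_castSucc, Fin.snoc_castSucc] at h3
    · show π₁ = π₂
      ext t
      have h3 := congrArg (fun σ : Equiv.Perm (Fin (n+1)) => σ t.castSucc) hπ
      simp only [extPerm_castSucc] at h3
      have h4 := Fin.castSucc_injective n h3
      exact congrArg Fin.val h4
  · rintro ⟨⟨x, π⟩, j⟩ hp
    rw [mem_filter] at hp
    obtain ⟨_, hQ, hBd⟩ := hp
    have hnot0 : ¬ (((j:ℕ) = 0) ∧ ((x (π 0)) : ℕ) + 1 = k) := by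
      rintro ⟨h0, hxk⟩
      obtain ⟨t, htj, htl⟩ := hQ 0 (by omega)
      have htv : (t:ℕ) ≠ 0 := fun h => htj (Fin.ext (h.trans h0.symm))
      have hvk : vert ((x, π) : Cell (n+1) k) (t:ℕ) (π 0) = k := by
        show (x (π 0) : ℕ) + (if ((π.symm (π 0) : Fin (n+1)) : ℕ) < (t:ℕ) then 1 else 0) = k
        rw [Equiv.symm_apply_apply]
        have hlt0 : ((0 : Fin (n+1)) : ℕ) < (t:ℕ) := by
          simp only [Fin.val_zero]; omega
        rw [if_pos hlt0]; omega
      exact (hB _ (π 0) (fun i => vert_le _ _ i) hvk).1 htl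
    rcases hBd with hcl | hcl
    · exact absurd hcl hnot0
    obtain ⟨hl, hx0⟩ := hcl
    have hvert0 : ∀ t : Fin (n+2), t ≠ j →
        vert ((x, π) : Cell (n+1) k) (t:ℕ) (π (Fin.last n)) = 0 := by
      intro t htj
      have htv : (t:ℕ) ≠ n+1 := fun h => htj (Fin.ext (h.trans hl.symm))
      have htlt := t.isLt
      show (x (π (Fin.last n)) : ℕ)
          + (if ((π.symm (π (Fin.last n)) : Fin (n+1)) : ℕ) < (t:ℕ) then 1 else 0) = 0
      rw [Equiv.symm_apply_apply]
      have hnlt : ¬ (((Fin.last n : Fin (n+1)) : ℕ) < (t:ℕ)) := by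
        simp only [Fin.val_last]; omega
      rw [if_neg hnlt]
      simpa using hx0
    have hfix : π (Fin.last n) = Fin.last n := by
      by_contra hne
      have h5 := (π (Fin.last n)).isLt
      have h6 : ((π (Fin.last n)) : ℕ) ≠ n := fun h => hne (Fin.ext (by simpa using h))
      obtain ⟨t, htj, htl⟩ := hQ (((π (Fin.last n)) : ℕ) + 1) (by omega)
      exact hA _ (π (Fin.last n)) (fun i => vert_le _ _ i) (hvert0 t htj) htl
    have hjlast : j = Fin.last (n+1) := Fin.ext (by simpa using hl)
    have hxlast : x (Fin.last n) = ⟨0, hk⟩ := by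
      apply Fin.ext
      show (x (Fin.last n) : ℕ) = 0
      rw [← hfix]; exact hx0
    have hsnoc : Fin.snoc (fun i : Fin n => x i.castSucc) (⟨0, hk⟩ : Fin k) = x := by
      funext i
      induction i using Fin.lastCases with
      | last => rw [Fin.snoc_last, hxlast]
      | cast i => rw [Fin.snoc_castSucc]
    have hcell : (((Fin.snoc (fun i : Fin n => x i.castSucc) (⟨0, hk⟩ : Fin k),
        extPerm (restrPerm π hfix)), Fin.last (n+1)) : Pair n k) = ((x, π), j) := by
      rw [hsnoc, extPerm_restrPerm, hjlast]
    refine ⟨((fun i => x i.castSucc, restrPerm π hfix) : Cell n k), ?_, hcell⟩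
    rw [mem_filter]
    refine ⟨mem_univ _, ?_⟩
    exact (Qp_ext_iff hk lab (fun i : Fin n => x i.castSucc) (restrPerm π hfix)).mp
      (by rw [hcell]; exact hQ)



end Flip

open scoped Classical in
theorem sperner_odd : ∀ n k : ℕ, 0 < k → ∀ lab : (Fin n → ℕ) → ℕ,
    (∀ v, (∀ j, v j ≤ k) → lab v ≤ n) →
    (∀ v (i : Fin n), (∀ j, v j ≤ k) → v i = 0 → lab v ≠ (i:ℕ) + 1) →
    (∀ v (i : Fin n), (∀ j, v j ≤ k) → v i = k → lab v ≠ 0 ∧ lab v ≤ (i:ℕ) + 1) →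
    Odd (univ.filter (fun c : Cell n k => Rainbow lab c)).card := by
  intro n
  induction n with
  | zero =>
    intro k hk lab hC hA hB
    have hall : (univ.filter (fun c : Cell 0 k => Rainbow lab c)) = univ := by
      apply Finset.filter_true_of_mem
      intro c _
      intro b hb
      interval_cases b
      refine ⟨0, le_refl _, ?_⟩
      have := hC (vert c 0) (fun i => vert_le c 0 i)
      omega
    rw [hall, Finset.card_univ, Fintype.card_prod, Fintype.card_fun, Fintype.card_perm]
    simp
  | succ n IH =>
    intro k hk lab hC hA hB
    have hb' : ∀ v : Fin n → ℕ, (∀ j, v j ≤ k) →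
        ∀ j : Fin (n+1), (Fin.snoc v 0 : Fin (n+1) → ℕ) j ≤ k := by
      intro v hv j
      induction j using Fin.lastCases with
      | last => rw [Fin.snoc_last]; omega
      | cast i => rw [Fin.snoc_castSucc]; exact hv i
    have hC' : ∀ v : Fin n → ℕ, (∀ j, v j ≤ k) → lab (Fin.snoc v 0) ≤ n := by
      intro v hv
      have h1 := hC _ (hb' v hv)
      have h2 := hA _ (Fin.last n) (hb' v hv) (Fin.snoc_last _ _)
      simp only [Fin.val_last] at h2
      omega
    have hA' : ∀ (v : Fin n → ℕ) (i : Fin n), (∀ j, v j ≤ k) → v i = 0 →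
        lab (Fin.snoc v 0) ≠ (i:ℕ) + 1 := by
      intro v i hv h0
      have := hA _ i.castSucc (hb' v hv) (by rw [Fin.snoc_castSucc]; exact h0)
      simpa using this
    have hB' : ∀ (v : Fin n → ℕ) (i : Fin n), (∀ j, v j ≤ k) → v i = k →
        lab (Fin.snoc v 0) ≠ 0 ∧ lab (Fin.snoc v 0) ≤ (i:ℕ) + 1 := by
      intro v i hv h0
      have := hB _ i.castSucc (hb' v hv) (by rw [Fin.snoc_castSucc]; exact h0)
      simpa using this
    have hodd' := IH k hk (fun v => lab (Fin.snoc v 0)) hC' hA' hB'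
    have e1 := step1 (n := n) (k := k) lab hC lemA
    have e2 := step2 (n := n) (k := k) lab
    have e3 := step3 (n := n) (k := k) hk lab hA hB
    have hz : ((univ.filter (fun c : Cell (n+1) k => Rainbow lab c)).card : ZMod 2)
        = ((univ.filter (fun c : Cell n k =>
            Rainbow (fun v => lab (Fin.snoc v 0)) c)).card : ZMod 2) := by
      rw [← e1, e2, ← e3]
    have hmod := (ZMod.natCast_eq_natCast_iff _ _ 2).mp hz
    rw [Nat.odd_iff] at hodd' ⊢
    unfold Nat.ModEq at hmod
    omega

end SpernerCube

section ChainLemmas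

variable {X : Type*} [PseudoMetricSpace X] {s : ℝ} {U : Set X}

lemma scaleChain_refl {x : X} (hx : x ∈ U) :
    ScaleChain (fun a b : X => dist a b) s U x x :=
  ⟨0, fun _ => x, rfl, rfl, fun _ _ => hx, fun i h => absurd h (Nat.not_lt_zero i)⟩

lemma scaleChain_symm {x y : X} (h : ScaleChain (fun a b : X => dist a b) s U x y) :
    ScaleChain (fun a b : X => dist a b) s U y x := by
  obtain ⟨m, c, h0, hm, hmem, hstep⟩ := h
  refine ⟨m, fun i => c (m - i), by simp [hm], by simp [h0], fun i hi => hmem _ (by omega), ?_⟩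
  intro i hi
  have h1 : m - i = (m - (i + 1)) + 1 := by omega
  show dist (c (m - i)) (c (m - (i + 1))) < s
  rw [h1, dist_comm]
  exact hstep _ (by omega)

lemma scaleChain_trans {x y z : X} (hxy : ScaleChain (fun a b : X => dist a b) s U x y)
    (hyz : ScaleChain (fun a b : X => dist a b) s U y z) :
    ScaleChain (fun a b : X => dist a b) s U x z := by
  obtain ⟨m1, c1, h10, h1m, h1mem, h1step⟩ := hxy
  obtain ⟨m2, c2, h20, h2m, h2mem, h2step⟩ := hyz
  refine ⟨m1 + m2, fun i => if i < m1 then c1 i else c2 (i - m1), ?_, ?_, ?_, ?_⟩ <;> dsimp only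
  · by_cases h : 0 < m1
    · rw [if_pos h]; exact h10
    · have hm1 : m1 = 0 := by omega
      rw [if_neg h]
      rw [hm1, Nat.sub_zero, h20, ← h1m, hm1, h10]
  · have hn : ¬ (m1 + m2 < m1) := by omega
    rw [if_neg hn]
    have he : m1 + m2 - m1 = m2 := by omega
    rw [he, h2m]
  · intro i hi
    by_cases h : i < m1
    · rw [if_pos h]; exact h1mem i (by omega)
    · rw [if_neg h]; exact h2mem (i - m1) (by omega)
  · intro i hi
    by_cases h : i + 1 < m1
    · rw [if_pos (by omega : i < m1), if_pos h]
      exact h1step i (by omega)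
    · by_cases h' : i < m1
      · have he : i + 1 = m1 := by omega
        rw [if_pos h', if_neg (by omega)]
        have h3 : c2 (i + 1 - m1) = c1 (i + 1) := by
          rw [he, Nat.sub_self, h20, ← h1m]
        rw [h3]
        exact h1step i (by omega)
      · rw [if_neg h', if_neg (by omega)]
        have e1 : i + 1 - m1 = (i - m1) + 1 := by omega
        rw [e1]
        exact h2step (i - m1) (by omega)

end ChainLemmas

section GridLab

open scoped Classical

/-- least coordinate (plus one) such that the `R`-component of `v` avoids the face `x_t = 0`. -/
noncomputable def gridLab (n K : ℕ)
    (R : (Fin n → Fin (K+1)) → (Fin n → Fin (K+1)) → Prop)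
    (v : Fin n → Fin (K+1)) : ℕ :=
  if h : {t : ℕ | ∃ ht : t < n, ∀ w, R v w → ((w ⟨t, ht⟩ : Fin (K+1)) : ℕ) ≠ 0}.Nonempty
  then sInf {t : ℕ | ∃ ht : t < n, ∀ w, R v w → ((w ⟨t, ht⟩ : Fin (K+1)) : ℕ) ≠ 0} + 1
  else 0

lemma gridLab_congr {n K : ℕ}
    {R : (Fin n → Fin (K+1)) → (Fin n → Fin (K+1)) → Prop}
    (hsymm : ∀ {u w}, R u w → R w u)
    (htrans : ∀ {u v w}, R u v → R v w → R u w)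
    {u w : Fin n → Fin (K+1)} (h : R u w) :
    gridLab n K R u = gridLab n K R w := by
  have hset : {t : ℕ | ∃ ht : t < n, ∀ w', R u w' → ((w' ⟨t, ht⟩ : Fin (K+1)) : ℕ) ≠ 0}
      = {t : ℕ | ∃ ht : t < n, ∀ w', R w w' → ((w' ⟨t, ht⟩ : Fin (K+1)) : ℕ) ≠ 0} := by
    ext t
    constructor
    · rintro ⟨ht, hm⟩
      exact ⟨ht, fun w' hw' => hm w' (htrans h hw')⟩
    · rintro ⟨ht, hm⟩
      exact ⟨ht, fun w' hw' => hm w' (htrans (hsymm h) hw')⟩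
  unfold gridLab
  rw [hset]


lemma gridLab_le {n K : ℕ} {R : (Fin n → Fin (K+1)) → (Fin n → Fin (K+1)) → Prop}
    (v : Fin n → Fin (K+1)) : gridLab n K R v ≤ n := by
  unfold gridLab
  split_ifs with h
  · obtain ⟨ht, -⟩ := Nat.sInf_mem h
    exact ht
  · omega

lemma gridLab_eq_succ {n K : ℕ} {R : (Fin n → Fin (K+1)) → (Fin n → Fin (K+1)) → Prop}
    {v : Fin n → Fin (K+1)} {t : ℕ} (h : gridLab n K R v = t + 1) :
    ∃ ht : t < n, ∀ w, R v w → ((w ⟨t, ht⟩ : Fin (K+1)) : ℕ) ≠ 0 := by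
  unfold gridLab at h
  split_ifs at h with hne
  · have h2 := Nat.add_right_cancel h
    have hmem := Nat.sInf_mem hne
    subst h2
    exact hmem

lemma gridLab_pos_of {n K : ℕ} {R : (Fin n → Fin (K+1)) → (Fin n → Fin (K+1)) → Prop}
    {v : Fin n → Fin (K+1)} (t : ℕ) (ht : t < n)
    (hmiss : ∀ w, R v w → ((w ⟨t, ht⟩ : Fin (K+1)) : ℕ) ≠ 0) :
    gridLab n K R v ≠ 0 ∧ gridLab n K R v ≤ t + 1 := by
  have hne : {t' : ℕ | ∃ ht' : t' < n,
      ∀ w, R v w → ((w ⟨t', ht'⟩ : Fin (K+1)) : ℕ) ≠ 0}.Nonempty := ⟨t, ht, hmiss⟩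
  unfold gridLab
  rw [dif_pos hne]
  refine ⟨Nat.succ_ne_zero _, ?_⟩
  have hmem2 : t ∈ {t' : ℕ | ∃ ht' : t' < n,
      ∀ w, R v w → ((w ⟨t', ht'⟩ : Fin (K+1)) : ℕ) ≠ 0} := ⟨ht, hmiss⟩
  have h3 := Nat.sInf_le hmem2
  exact Nat.succ_le_succ h3

end GridLab


open Filter SpernerCube in
/-- If a metric space contains a sequence of `n`-dimensional dilated cubes of sizes
`k m → ∞`, then its asymptotic Assouad-Nagata dimension is at least `n`, i.e. it is
not at most `m` for any `m < n`. -/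
theorem asdimAN_ge_of_dilated_cubes {X : Type*} [PseudoMetricSpace X] (n : ℕ)
    (k : ℕ → ℕ) (C : ℕ → ℝ) (hC : ∀ m, 1 ≤ C m)
    (f : ∀ m, (Fin n → Fin (k m + 1)) → X)
    (hcube : ∀ m (a b : Fin n → Fin (k m + 1)),
      dist (f m a) (f m b) = C m * ∑ i, |((a i : ℕ) : ℝ) - ((b i : ℕ) : ℝ)|)
    (hk : Tendsto (fun m => (k m : ℕ)) atTop atTop) :
    ∀ m : ℕ, m < n → ¬ ANdimLE (fun a b : X => dist a b) m := by
  classical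
  intro m hmn hAN
  obtain ⟨C', hC', b, hcontrol⟩ := hAN
  set L : ℝ := C' * (n + 1) + max b 0 with hLdef
  obtain ⟨M, hM⟩ := (hk.eventually_ge_atTop (⌈L⌉₊ + 1)).exists
  set K := k M with hKdef
  have hK1 : 0 < K := by omega
  have hKL : L < (K : ℝ) := by
    have h1 : L ≤ (⌈L⌉₊ : ℝ) := Nat.le_ceil L
    have h2 : ((⌈L⌉₊ : ℕ) : ℝ) + 1 ≤ (K : ℝ) := by exact_mod_cast hM
    linarith
  have hCM := hC M
  have hCM0 : (0:ℝ) < C M := by linarith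
  set s : ℝ := (n + 1) * C M with hsdef
  have hspos : 0 < s := by
    have hn1 : (0:ℝ) < (n:ℝ) + 1 := by positivity
    exact mul_pos hn1 hCM0
  obtain ⟨U, hcov, hcomp⟩ := hcontrol s hspos
  -- the coloring of the grid
  have hχex : ∀ v : Fin n → Fin (K + 1), ∃ i, f M v ∈ U i := fun v => hcov (f M v)
  set χ : (Fin n → Fin (K + 1)) → Fin (m+1) := fun v => (hχex v).choose with hχdef
  have hχ : ∀ v, f M v ∈ U (χ v) := fun v => (hχex v).choose_spec
  -- the chain relation
  set R : (Fin n → Fin (K + 1)) → (Fin n → Fin (K + 1)) → Prop := fun u w => χ u = χ w ∧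
    ScaleChain (fun a b : X => dist a b) s (U (χ u)) (f M u) (f M w) with hRdef
  have hRrefl : ∀ v, R v v := fun v => ⟨rfl, scaleChain_refl (hχ v)⟩
  have hRsymm : ∀ {u w}, R u w → R w u := by
    rintro u w ⟨h1, h2⟩
    refine ⟨h1.symm, ?_⟩
    rw [← h1]
    exact scaleChain_symm h2
  have hRtrans : ∀ {u v w}, R u v → R v w → R u w := by
    rintro u v w ⟨h1, h2⟩ ⟨h3, h4⟩
    refine ⟨h1.trans h3, scaleChain_trans h2 ?_⟩
    rw [h1]
    exact h4
  -- distance control on components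
  have hS : ∀ u w, R u w → (∑ i, |((u i : ℕ) : ℝ) - ((w i : ℕ) : ℝ)|) ≤ L := by
    intro u w hR
    have hc := hcomp (χ u) (f M u) (f M w) hR.2
    simp only at hc
    rw [hcube M u w] at hc
    have h2 : (0:ℝ) ≤ max b 0 := le_max_right b 0
    have h3 : b ≤ max b 0 * C M := by nlinarith [le_max_left b 0]
    have h4 : C M * (∑ i, |((u i : ℕ) : ℝ) - ((w i : ℕ) : ℝ)|)
        ≤ C M * L := by
      rw [hLdef]
      rw [hsdef] at hc
      nlinarith
    exact le_of_mul_le_mul_left h4 hCM0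
  -- the labelling
  set lab : (Fin n → ℕ) → ℕ := fun v =>
    if h : ∀ j, v j ≤ K then gridLab n K R (fun i => ⟨v i, Nat.lt_succ_of_le (h i)⟩) else 0
    with hlabdef
  have hlab_eq : ∀ (v : Fin n → ℕ) (h : ∀ j, v j ≤ K),
      lab v = gridLab n K R (fun i => ⟨v i, Nat.lt_succ_of_le (h i)⟩) := by
    intro v h
    rw [hlabdef]
    exact dif_pos h
  have hlab_le : ∀ v : Fin n → ℕ, (∀ j, v j ≤ K) → lab v ≤ n := by
    intro v hv
    rw [hlab_eq v hv]
    exact gridLab_le _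
  have hlab_A : ∀ (v : Fin n → ℕ) (i : Fin n), (∀ j, v j ≤ K) → v i = 0 →
      lab v ≠ (i:ℕ) + 1 := by
    intro v i hv h0 heq
    rw [hlab_eq v hv] at heq
    obtain ⟨ht, hmiss⟩ := gridLab_eq_succ heq
    have h1 := hmiss _ (hRrefl (fun t => ⟨v t, Nat.lt_succ_of_le (hv t)⟩))
    have h2 : (⟨(i:ℕ), ht⟩ : Fin n) = i := Fin.ext rfl
    rw [h2] at h1
    exact h1 h0
  have hlab_B : ∀ (v : Fin n → ℕ) (i : Fin n), (∀ j, v j ≤ K) → v i = K →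
      lab v ≠ 0 ∧ lab v ≤ (i:ℕ) + 1 := by
    intro v i hv h0
    rw [hlab_eq v hv]
    have hmiss : ∀ w, R (fun t => ⟨v t, Nat.lt_succ_of_le (hv t)⟩) w →
        ((w ⟨(i:ℕ), i.isLt⟩ : Fin (K+1)) : ℕ) ≠ 0 := by
      intro w hw hw0
      have hsum := hS _ w hw
      have h1 : |(((⟨v i, Nat.lt_succ_of_le (hv i)⟩ : Fin (K+1)) : ℕ) : ℝ)
            - ((w i : ℕ) : ℝ)|
          ≤ ∑ t, |(((⟨v t, Nat.lt_succ_of_le (hv t)⟩ : Fin (K+1)) : ℕ) : ℝ)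
            - ((w t : ℕ) : ℝ)| :=
        Finset.single_le_sum
          (f := fun t => |(((⟨v t, Nat.lt_succ_of_le (hv t)⟩ : Fin (K+1)) : ℕ) : ℝ)
            - ((w t : ℕ) : ℝ)|)
          (fun t _ => abs_nonneg _) (Finset.mem_univ i)
      have hsum' : (∑ t, |(((⟨v t, Nat.lt_succ_of_le (hv t)⟩ : Fin (K+1)) : ℕ) : ℝ)
            - ((w t : ℕ) : ℝ)|) ≤ L := hsum
      have h2 : ((w i : ℕ) : ℝ) = 0 := by
        have h3 : (w ⟨(i:ℕ), i.isLt⟩ : ℕ) = 0 := by omega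
        have h4 : (⟨(i:ℕ), i.isLt⟩ : Fin n) = i := Fin.ext rfl
        rw [h4] at h3
        exact_mod_cast h3
      have h5 : (((⟨v i, Nat.lt_succ_of_le (hv i)⟩ : Fin (K+1)) : ℕ) : ℝ)
          = (K : ℝ) := by
        show ((v i : ℕ) : ℝ) = (K : ℝ)
        exact_mod_cast h0
      rw [h2, h5, sub_zero] at h1
      have h6 : (0:ℝ) ≤ (K:ℝ) := by positivity
      rw [abs_of_nonneg h6] at h1
      linarith [h1, hsum', hKL]
    have := gridLab_pos_of (R := R) ((i:ℕ)) i.isLt hmiss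
    exact this
  -- apply the Sperner-type theorem
  have hodd := SpernerCube.sperner_odd n K hK1 lab hlab_le hlab_A hlab_B
  have hpos : 0 < (Finset.univ.filter
      (fun c : Cell n K => Rainbow lab c)).card := by
    rw [Nat.odd_iff] at hodd
    omega
  obtain ⟨c, hc⟩ := Finset.card_pos.mp hpos
  rw [Finset.mem_filter] at hc
  have hrain := hc.2
  -- vertices of the rainbow cell, as grid points
  set Vg : Fin (n+1) → (Fin n → Fin (K + 1)) := fun j => fun i =>
    ⟨vert c (j:ℕ) i, Nat.lt_succ_of_le (vert_le c (j:ℕ) i)⟩ with hVgdef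
  have hlabv : ∀ j : Fin (n+1), lab (vert c (j:ℕ)) = gridLab n K R (Vg j) :=
    fun j => hlab_eq (vert c (j:ℕ)) (fun i => vert_le c (j:ℕ) i)
  -- the labels of the n+1 vertices are pairwise distinct
  set lfun : Fin (n+1) → Fin (n+1) := fun j =>
    ⟨lab (vert c (j:ℕ)), Nat.lt_succ_of_le (hlab_le _ (fun i => vert_le c (j:ℕ) i))⟩
    with hlfundef
  have hsurj : Function.Surjective lfun := by
    intro bb
    obtain ⟨j, hj, hjl⟩ := hrain bb.val (Nat.lt_succ_iff.mp bb.isLt)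
    exact ⟨⟨j, by omega⟩, Fin.ext hjl⟩
  have hinj : Function.Injective lfun := Finite.injective_iff_surjective.mpr hsurj
  -- two vertices share a color
  obtain ⟨j₁, j₂, hne, hcol⟩ := Fintype.exists_ne_map_eq_of_card_lt
    (fun j : Fin (n+1) => χ (Vg j)) (by simp only [Fintype.card_fin]; omega)
  -- they are at distance < s
  have hdist12 : dist (f M (Vg j₁)) (f M (Vg j₂)) < s := by
    rw [hcube]
    have hcoord : ∀ i : Fin n, |((Vg j₁ i : ℕ) : ℝ) - ((Vg j₂ i : ℕ) : ℝ)| ≤ 1 := by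
      intro i
      show |((vert c (j₁:ℕ) i : ℕ) : ℝ) - ((vert c (j₂:ℕ) i : ℕ) : ℝ)| ≤ 1
      unfold SpernerCube.vert
      push_cast
      split_ifs <;> simp
    have hsum : (∑ i, |((Vg j₁ i : ℕ) : ℝ) - ((Vg j₂ i : ℕ) : ℝ)|) ≤ (n:ℝ) := by
      calc (∑ i, |((Vg j₁ i : ℕ) : ℝ) - ((Vg j₂ i : ℕ) : ℝ)|)
          ≤ ∑ _i : Fin n, (1:ℝ) := Finset.sum_le_sum (fun i _ => hcoord i)
        _ = (n:ℝ) := by simp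
    rw [hsdef]
    nlinarith
  -- hence they are chain-connected inside their common color class
  have hstep : R (Vg j₁) (Vg j₂) := by
    refine ⟨hcol, 1, (fun t => if t = 0 then f M (Vg j₁) else f M (Vg j₂)),
      by simp, by simp, ?_, ?_⟩
    · intro t _
      dsimp only
      by_cases h : t = 0
      · rw [if_pos h]; exact hχ _
      · rw [if_neg h]
        rw [hcol]
        exact hχ _
    · intro t ht
      have h : t = 0 := by omega
      subst h
      dsimp only
      simpa using hdist12
  have hgl : gridLab n K R (Vg j₁) = gridLab n K R (Vg j₂) :=
    gridLab_congr (R := R) (fun {u w} h => hRsymm h) (fun {u v w} h1 h2 => hRtrans h1 h2) hstep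
  have hfin : lfun j₁ = lfun j₂ := by
    apply Fin.ext
    show lab (vert c ((j₁:ℕ))) = lab (vert c ((j₂:ℕ)))
    rw [hlabv j₁, hlabv j₂]
    exact hgl
  exact hne (hinj hfin)
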